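/- Let α ∈ (2,∞) and let F : (0,∞) → (0,∞) be continuous, strictly increasing with lim_{t→∞} F(t) = ∞, and regularly varying of index 1/α. Let W : ℝ² → (0,∞) be measurable with regular (F,α)-decay. Then for every ξ ∈ ℝ² with ξ ≠ 0, lim_{t→∞} t · W(F(t) ξ) = |ξ|^{−α}. -/

import Mathlib

open MeasureTheory Filter Real

noncomputable section

abbrev E2 := EuclideanSpace ℝ (Fin 2)

/-- For `W` with regular `(F,α)`-decay, `α ∈ (2,∞)`:
`lim_{t→∞} t · W(F(t)ξ) = |ξ|^{-α}` for each `ξ ≠ 0`. -/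
theorem stmt_3
    (α : ℝ) (hα : 2 < α)
    (F : ℝ → ℝ)
    (hFpos : ∀ t > 0, 0 < F t)
    (hFcont : ContinuousOn F (Set.Ioi 0))
    (hFmono : StrictMonoOn F (Set.Ioi 0))
    (hFtop : Tendsto F atTop atTop)
    (hFreg : ∀ c > 0, Tendsto (fun t : ℝ => F (c * t) / F t) atTop (nhds (c ^ (1 / α))))
    (W : E2 → ℝ)
    (hWpos : ∀ x, 0 < W x)
    (hWmeas : Measurable W)
    (hWdecay : Tendsto (fun x : E2 => F (1 / W x) / ‖x‖)
      (comap (fun x : E2 => ‖x‖) atTop) (nhds 1))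
    (ξ : E2) (hξ : ξ ≠ 0) :
    Tendsto (fun t : ℝ => t * W (F t • ξ)) atTop (nhds (‖ξ‖ ^ (-α))) := by
  have hn : (0:ℝ) < ‖ξ‖ := norm_pos_iff.mpr hξ
  have hα0 : (0:ℝ) < α := by linarith
  have hnα : (0:ℝ) < ‖ξ‖ ^ α := Real.rpow_pos_of_pos hn α
  have hroot : (‖ξ‖ ^ α) ^ (1/α) = ‖ξ‖ := by
    rw [← Real.rpow_mul hn.le, mul_one_div_cancel hα0.ne', Real.rpow_one]
  have hg0 : ∀ t : ℝ, 0 < 1 / W (F t • ξ) := fun t => by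
    have := hWpos (F t • ξ); positivity
  -- norm of F t • ξ
  have hnorm : ∀ᶠ t in atTop, ‖F t • ξ‖ = F t * ‖ξ‖ := by
    filter_upwards [eventually_gt_atTop (0:ℝ)] with t ht
    rw [norm_smul, Real.norm_eq_abs, abs_of_pos (hFpos t ht)]
  have hcomp : Tendsto (fun t : ℝ => F t • ξ) atTop (comap (fun x : E2 => ‖x‖) atTop) := by
    rw [tendsto_comap_iff]
    apply Tendsto.congr' (hnorm.mono fun t ht => ht.symm)
    exact hFtop.atTop_mul_const hn
  have hW1 : Tendsto (fun t : ℝ => F (1 / W (F t • ξ)) / ‖F t • ξ‖) atTop (nhds 1) :=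
    hWdecay.comp hcomp
  have hFg : Tendsto (fun t : ℝ => F (1 / W (F t • ξ)) / F t) atTop (nhds ‖ξ‖) := by
    have h := hW1.mul_const ‖ξ‖
    rw [one_mul] at h
    apply h.congr'
    filter_upwards [hnorm, eventually_gt_atTop (0:ℝ)] with t ht h0
    rw [ht]
    have hFt : F t ≠ 0 := (hFpos t h0).ne'
    field_simp
  -- key: (1/W(F t • ξ))/t → ‖ξ‖^α
  have key : Tendsto (fun t : ℝ => (1 / W (F t • ξ)) / t) atTop (nhds (‖ξ‖ ^ α)) := by
    rw [tendsto_order]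
    constructor
    · intro b hb
      rcases le_or_gt b 0 with hb0 | hb0
      · filter_upwards [eventually_gt_atTop (0:ℝ)] with t ht
        exact lt_of_le_of_lt hb0 (div_pos (hg0 t) ht)
      · have hblt : b ^ (1/α) < ‖ξ‖ := by
          have h := Real.rpow_lt_rpow hb0.le hb (by positivity : (0:ℝ) < 1/α)
          rwa [hroot] at h
        have hev := (hFreg b hb0).eventually_lt hFg hblt
        filter_upwards [hev, eventually_gt_atTop (0:ℝ)] with t hlt ht
        rw [lt_div_iff₀ ht]
        have h1 : F (b * t) < F (1 / W (F t • ξ)) :=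
          (div_lt_div_iff_of_pos_right (hFpos t ht)).mp hlt
        exact ((hFmono.lt_iff_lt (Set.mem_Ioi.mpr (by positivity))
          (Set.mem_Ioi.mpr (hg0 t))).mp h1)
    · intro b hb
      have hb0 : (0:ℝ) < b := lt_trans hnα hb
      have hblt : ‖ξ‖ < b ^ (1/α) := by
        have h := Real.rpow_lt_rpow hnα.le hb (by positivity : (0:ℝ) < 1/α)
        rwa [hroot] at h
      have hev := hFg.eventually_lt (hFreg b hb0) hblt
      filter_upwards [hev, eventually_gt_atTop (0:ℝ)] with t hlt ht
      rw [div_lt_iff₀ ht]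
      have h1 : F (1 / W (F t • ξ)) < F (b * t) :=
        (div_lt_div_iff_of_pos_right (hFpos t ht)).mp hlt
      exact ((hFmono.lt_iff_lt (Set.mem_Ioi.mpr (hg0 t))
        (Set.mem_Ioi.mpr (by positivity))).mp h1)
  have hinv := key.inv₀ hnα.ne'
  rw [Real.rpow_neg hn.le]
  apply hinv.congr'
  filter_upwards [eventually_gt_atTop (0:ℝ)] with t ht
  have hW : W (F t • ξ) ≠ 0 := (hWpos (F t • ξ)).ne'
  field_simp
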